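/- arXiv:1309.6296 — 2 statements merged into one kernel-verified Lean document; each statement's English description precedes it below -/
import Mathlib

section
/- Let (G, d) be a metric space with a measure whose balls satisfy volume doubling V(x, 2r) ≤ C_{VD} V(x, r), where every ball has finite positive volume. Suppose a norm structure is 'well-connected': there is b > 0 such that for every r > 0 and x with ‖x‖ ≤ r there is a finite chain e = x₀, x₁, …, x_N = x with ‖xᵢ‖ ≤ 2r and ‖xᵢ⁻¹x_{i+1}‖ ≤ b. Then for every ε > 0 there exists M_ε such that for all r ≥ 8b/ε and every x with ‖x‖ ≤ r there exist points z₀ = e, z₁, …, z_M = x with M ≤ M_ε and ‖zᵢ⁻¹z_{i+1}‖ ≤ εr for all i. -/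
theorem chain_shorten' {G : Type*} (S : Finset G) (P : G → G → Prop) :
    ∀ n : ℕ, ∀ w : ℕ → G, (∀ k ≤ n, w k ∈ S) → (∀ k < n, P (w k) (w (k+1))) →
    ∃ (M : ℕ) (v : ℕ → G), M < S.card ∧ v 0 = w 0 ∧ v M = w n ∧
      ∀ k < M, P (v k) (v (k+1)) := by
  intro n
  induction n using Nat.strong_induction_on with
  | _ n ih =>
    intro w hmem hstep
    by_cases hn : n < S.card
    · exact ⟨n, w, hn, rfl, rfl, hstep⟩
    · push_neg at hn
      have hcard : S.card < (Finset.range (n+1)).card := by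
        simpa using Nat.lt_succ_of_le hn
      obtain ⟨a, ha, c, hc, hac, heq⟩ :=
        Finset.exists_ne_map_eq_of_card_lt_of_maps_to hcard
          (fun k hk => hmem k (Nat.lt_succ_iff.mp (Finset.mem_range.mp hk)))
      simp only [Finset.mem_range] at ha hc
      obtain ⟨i, j, hij, hjn, hwij⟩ : ∃ i j, i < j ∧ j ≤ n ∧ w i = w j := by
        rcases lt_or_gt_of_ne hac with h | h
        · exact ⟨a, c, h, by omega, heq⟩
        · exact ⟨c, a, h, by omega, heq.symm⟩
      set d := j - i with hd
      set w' : ℕ → G := fun k => if k ≤ i then w k else w (k + d) with hw'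
      have h0 : w' 0 = w 0 := by simp [hw']
      have hend : w' (n - d) = w n := by
        by_cases h : n - d ≤ i
        · have hni : n - d = i ∧ n = j := by omega
          simp only [hw', hni.1, if_pos le_rfl]
          rw [hwij, hni.2]
        · simp only [hw', if_neg h]
          congr 1; omega
      have hmem' : ∀ k ≤ n - d, w' k ∈ S := by
        intro k hk
        by_cases h : k ≤ i
        · simpa [hw', h] using hmem k (by omega)
        · simpa [hw', h] using hmem (k + d) (by omega)
      have hstep' : ∀ k < n - d, P (w' k) (w' (k+1)) := by
        intro k hk
        by_cases h1 : k + 1 ≤ i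
        · have := hstep k (by omega)
          simpa [hw', h1, Nat.le_of_succ_le h1] using this
        · by_cases h2 : k ≤ i
          · have hki : k = i := by omega
            have := hstep j (by omega)
            have e1 : w' k = w j := by simp [hw', h2, hki, hwij]
            have e2 : w' (k+1) = w (j+1) := by
              simp only [hw', if_neg h1]; congr 1; omega
            rw [e1, e2]; exact this
          · have := hstep (k + d) (by omega)
            have e1 : w' k = w (k + d) := by simp [hw', h2]
            have e2 : w' (k+1) = w (k + d + 1) := by
              simp only [hw', if_neg h1]; congr 1; omega
            rw [e1, e2]; exact this
      obtain ⟨M, v, hM, hv0, hvM, hvstep⟩ := ih (n - d) (by omega) w' hmem' hstep'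
      exact ⟨M, v, hM, by rw [hv0, h0], by rw [hvM, hend], hvstep⟩

/-- Lemma 3.4: if the norm is well-connected and volume is doubling, then for every `ε > 0`
there is `M_ε` such that any point of the ball of radius `r ≥ 8b/ε` can be joined to the
identity by a chain of at most `M_ε` steps of size at most `εr`. -/
theorem wellConnected_short_chains {G : Type*} [Group G] [Countable G]
    (N : G → ℝ)
    (hnonneg : ∀ g, 0 ≤ N g)
    (hzero : ∀ g, N g = 0 ↔ g = 1)
    (hsub : ∀ g h, N (g * h) ≤ N g + N h)
    (hNsymm : ∀ g, N g⁻¹ = N g)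
    (hfin : ∀ r : ℝ, {g : G | N g ≤ r}.Finite)
    (CVD : ℝ)
    (hdoubling : ∀ r : ℝ, 0 < r →
      ({g : G | N g ≤ 2 * r}.ncard : ℝ) ≤ CVD * ({g : G | N g ≤ r}.ncard : ℝ))
    (b : ℝ) (hb : 0 < b)
    (hwc : ∀ r : ℝ, 0 < r → ∀ x : G, N x ≤ r →
      ∃ (n : ℕ) (z : ℕ → G), z 0 = 1 ∧ z n = x ∧
        (∀ i ≤ n, N (z i) ≤ 2 * r) ∧
        (∀ i < n, N ((z i)⁻¹ * z (i + 1)) ≤ b)) :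
    ∀ ε : ℝ, 0 < ε → ∃ Mε : ℕ, ∀ r : ℝ, 8 * b / ε ≤ r → ∀ x : G, N x ≤ r →
      ∃ (M : ℕ) (z : ℕ → G), M ≤ Mε ∧ z 0 = 1 ∧ z M = x ∧
        ∀ i < M, N ((z i)⁻¹ * z (i + 1)) ≤ ε * r := by
  classical
  have hN1 : N 1 = 0 := (hzero 1).mpr rfl
  -- volume facts
  have hVmono : ∀ t t' : ℝ, t ≤ t' → (hfin t).toFinset ⊆ (hfin t').toFinset := by
    intro t t' h g hg
    simp only [Set.Finite.mem_toFinset, Set.mem_setOf_eq] at *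
    exact hg.trans h
  have hV1 : ∀ t : ℝ, 0 ≤ t → 1 ≤ (hfin t).toFinset.card := by
    intro t ht
    refine Finset.card_pos.mpr ⟨1, ?_⟩
    simp [Set.Finite.mem_toFinset, hN1, ht]
  have hVd : ∀ t : ℝ, 0 < t →
      ((hfin (2*t)).toFinset.card : ℝ) ≤ CVD * (hfin t).toFinset.card := by
    intro t ht
    have := hdoubling t ht
    rwa [Set.ncard_eq_toFinset_card _ (hfin (2*t)), Set.ncard_eq_toFinset_card _ (hfin t)] at this
  have hCVD : 1 ≤ CVD := by
    have h1 := hV1 1 zero_le_one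
    have h12 : ((hfin 1).toFinset.card : ℝ) ≤ (hfin (2*1)).toFinset.card := by
      exact_mod_cast Finset.card_le_card (hVmono 1 (2*1) (by norm_num))
    have h2 := hVd 1 one_pos
    have hpos : (0:ℝ) < (hfin 1).toFinset.card := by exact_mod_cast h1
    nlinarith
  have hCVD0 : (0:ℝ) ≤ CVD := by linarith
  have hiter : ∀ k : ℕ, ∀ t : ℝ, 0 < t →
      ((hfin (2^k * t)).toFinset.card : ℝ) ≤ CVD^k * (hfin t).toFinset.card := by
    intro k
    induction k with
    | zero => intro t ht; simp
    | succ k ih =>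
      intro t ht
      have h1 : (2:ℝ)^(k+1) * t = 2 * (2^k * t) := by ring
      have h2 := hVd (2^k * t) (by positivity)
      rw [h1]
      calc ((hfin (2 * (2^k * t))).toFinset.card : ℝ) ≤ CVD * (hfin (2^k*t)).toFinset.card := h2
        _ ≤ CVD * (CVD^k * (hfin t).toFinset.card) := by nlinarith [ih t ht]
        _ = CVD^(k+1) * (hfin t).toFinset.card := by ring
  intro ε hε
  obtain ⟨m, hm⟩ : ∃ m : ℕ, 16/ε + 1 ≤ 2^m := by
    obtain ⟨m, hm⟩ := pow_unbounded_of_one_lt (16/ε + 1) (by norm_num : (1:ℝ) < 2)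
    exact ⟨m, hm.le⟩
  refine ⟨Nat.floor (CVD^m) + 2, ?_⟩
  intro r hr x hx
  have hrpos : 0 < r := lt_of_lt_of_le (by positivity) hr
  set s : ℝ := ε * r / 8 with hs_def
  have hs : 0 < s := by positivity
  have hbs : b ≤ s := by
    have h8 : 8 * b ≤ r * ε := (div_le_iff₀ hε).mp hr
    simp only [hs_def]; linarith
  obtain ⟨n, z, hz0, hzn, hz2r, hzb⟩ := hwc r hrpos x hx
  -- maximal 2s-separated subset of the ball of radius 2r
  set P2r := (hfin (2*r)).toFinset with hP2r
  set 𝒮 := P2r.powerset.filter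
    (fun T => ∀ y ∈ T, ∀ y' ∈ T, y ≠ y' → 2*s < N (y⁻¹ * y')) with h𝒮
  have hne : (∅ : Finset G) ∈ 𝒮 := by simp [h𝒮]
  obtain ⟨Y, hY𝒮, hYmax⟩ := Finset.exists_max_image 𝒮 Finset.card ⟨∅, hne⟩
  simp only [h𝒮, Finset.mem_filter, Finset.mem_powerset] at hY𝒮
  obtain ⟨hYsub, hYsep⟩ := hY𝒮
  -- maximality gives covering
  have hcover : ∀ g : G, N g ≤ 2*r → ∃ y ∈ Y, N (y⁻¹ * g) ≤ 2*s := by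
    intro g hg
    by_contra hcon
    push_neg at hcon
    have hgY : g ∉ Y := by
      intro h
      have := hcon g h
      simp [hN1] at this
      linarith
    have hins : insert g Y ∈ 𝒮 := by
      simp only [h𝒮, Finset.mem_filter, Finset.mem_powerset]
      constructor
      · intro a ha
        rcases Finset.mem_insert.mp ha with h | h
        · rw [h]
          simp only [hP2r, Set.Finite.mem_toFinset, Set.mem_setOf_eq]
          exact hg
        · exact hYsub h
      · intro y hy y' hy' hne'
        rcases Finset.mem_insert.mp hy with h | h <;>
          rcases Finset.mem_insert.mp hy' with h' | h'
        · exact absurd (h.trans h'.symm) hne'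
        · have := hcon y' h'
          have e : (y'⁻¹ * g)⁻¹ = g⁻¹ * y' := by group
          rw [← hNsymm (y'⁻¹ * g), e] at this
          rw [h]
          exact this
        · have := hcon y h
          rw [h']
          exact this
        · exact hYsep y h y' h' hne'
    have := hYmax _ hins
    rw [Finset.card_insert_of_notMem hgY] at this
    omega
  -- packing bound : |Y| ≤ CVD^m
  have hYcard : (Y.card : ℝ) ≤ CVD^m := by
    set B := (hfin s).toFinset with hB
    set Big := (hfin (2*r + s)).toFinset with hBig
    have hinj : (Y ×ˢ B).card ≤ Big.card := by
      apply Finset.card_le_card_of_injOn (fun p => p.1 * p.2)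
      · rintro ⟨y, g⟩ hp
        rw [Finset.mem_coe, Finset.mem_product] at hp
        have hy := hYsub hp.1
        simp only [hP2r, hB, Set.Finite.mem_toFinset, Set.mem_setOf_eq] at hy hp
        simp only [hBig, Finset.mem_coe, Set.Finite.mem_toFinset, Set.mem_setOf_eq]
        calc N (y * g) ≤ N y + N g := hsub y g
          _ ≤ 2*r + s := add_le_add hy hp.2
      · rintro ⟨y1, g1⟩ hp1 ⟨y2, g2⟩ hp2 heq
        simp only [Finset.coe_product, Set.mem_prod, Finset.mem_coe, Finset.mem_product] at hp1 hp2
        simp only at heq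
        have hyy : y1 = y2 := by
          by_contra hne'
          have hsep := hYsep y1 hp1.1 y2 hp2.1 hne'
          have h2' : y1 * g1 * g2⁻¹ = y2 := mul_inv_eq_iff_eq_mul.mpr heq
          have e : y1⁻¹ * y2 = g1 * g2⁻¹ := by rw [← h2']; group
          have hg1 : N g1 ≤ s := by
            have := hp1.2; simpa [hB, Set.Finite.mem_toFinset] using this
          have hg2 : N g2 ≤ s := by
            have := hp2.2; simpa [hB, Set.Finite.mem_toFinset] using this
          have : N (y1⁻¹ * y2) ≤ 2*s := by
            rw [e]
            calc N (g1 * g2⁻¹) ≤ N g1 + N g2⁻¹ := hsub _ _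
              _ = N g1 + N g2 := by rw [hNsymm]
              _ ≤ 2*s := by linarith
          linarith
        subst hyy
        have : g1 = g2 := by
          have := heq
          exact mul_left_cancel this
        simp [this]
    rw [Finset.card_product] at hinj
    have hmono2 : Big.card ≤ (hfin (2^m * s)).toFinset.card := by
      apply Finset.card_le_card
      apply hVmono
      have h16 : (16/ε) * s = 2 * r := by
        field_simp [hs_def]; ring
      calc 2*r + s = (16/ε) * s + s := by rw [h16]
        _ = (16/ε + 1) * s := by ring
        _ ≤ 2^m * s := by
            apply mul_le_mul_of_nonneg_right hm hs.le
    have hd := hiter m s hs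
    have hB1 : (1:ℝ) ≤ B.card := by exact_mod_cast hV1 s hs.le
    have hchain : (Y.card : ℝ) * B.card ≤ CVD^m * B.card := by
      calc (Y.card : ℝ) * B.card = ((Y.card * B.card : ℕ) : ℝ) := by push_cast; ring
        _ ≤ (Big.card : ℝ) := by exact_mod_cast hinj
        _ ≤ ((hfin (2^m * s)).toFinset.card : ℝ) := by exact_mod_cast hmono2
        _ ≤ CVD^m * B.card := hd
    have hBpos : (0:ℝ) < B.card := by linarith
    exact le_of_mul_le_mul_right hchain hBpos
  have hYcardN : Y.card ≤ Nat.floor (CVD^m) := Nat.le_floor hYcard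
  -- create chain by projecting onto Y
  choose! Yf hYf1 hYf2 using hcover
  set w : ℕ → G := fun k => if k = 0 then 1 else if n ≤ k then x else Yf (z k) with hw
  set S : Finset G := insert 1 (insert x Y) with hS
  have hScard : S.card ≤ Nat.floor (CVD^m) + 2 := by
    calc S.card ≤ (insert x Y).card + 1 := Finset.card_insert_le _ _
      _ ≤ Y.card + 1 + 1 := by
          have := Finset.card_insert_le x Y; omega
      _ ≤ Nat.floor (CVD^m) + 2 := by omega
  have hmemS : ∀ k ≤ n, w k ∈ S := by
    intro k hk
    simp only [hw]
    by_cases h0 : k = 0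
    · simp [h0, hS]
    · by_cases h1 : n ≤ k
      · simp [h0, h1, hS]
      · push_neg at h1
        rw [if_neg h0, if_neg (by omega : ¬ n ≤ k)]
        have := hYf1 (z k) (hz2r k hk)
        simp [hS, this]
  have haux : ∀ k ≤ n, N ((w k)⁻¹ * z k) ≤ 2*s := by
    intro k hk
    simp only [hw]
    by_cases h0 : k = 0
    · simp [h0, hz0, hN1]; positivity
    · by_cases h1 : n ≤ k
      · have : k = n := by omega
        rw [if_neg h0, if_pos h1, this, hzn]
        simp [hN1]; positivity
      · rw [if_neg h0, if_neg h1]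
        exact hYf2 (z k) (hz2r k hk)
  have hstepw : ∀ k < n, N ((w k)⁻¹ * w (k+1)) ≤ ε * r := by
    intro k hk
    have h1 := haux k (by omega)
    have h2 := haux (k+1) (by omega)
    have h3 := hzb k hk
    have h2' : N ((z (k+1))⁻¹ * w (k+1)) ≤ 2*s := by
      have e : ((w (k+1))⁻¹ * z (k+1))⁻¹ = (z (k+1))⁻¹ * w (k+1) := by group
      rw [← e, hNsymm]; exact h2
    have e : (w k)⁻¹ * w (k+1) =
        ((w k)⁻¹ * z k) * ((z k)⁻¹ * z (k+1)) * ((z (k+1))⁻¹ * w (k+1)) := by group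
    have a1 := hsub (((w k)⁻¹ * z k) * ((z k)⁻¹ * z (k+1))) ((z (k+1))⁻¹ * w (k+1))
    have a2 := hsub ((w k)⁻¹ * z k) ((z k)⁻¹ * z (k+1))
    have : N ((w k)⁻¹ * w (k+1)) ≤ 5*s := by rw [e]; linarith
    have h8 : ε * r = 8 * s := by rw [hs_def]; ring
    linarith
  obtain ⟨M, v, hM, hv0, hvM, hvstep⟩ := chain_shorten' S (fun g h => N (g⁻¹ * h) ≤ ε * r) n w hmemS hstepw
  refine ⟨M, v, ?_, ?_, ?_, hvstep⟩
  · omega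
  · rw [hv0]; simp [hw]
  · rw [hvM]
    simp only [hw]
    by_cases h0 : n = 0
    · subst h0
      rw [if_pos rfl, ← hzn, hz0]
    · rw [if_neg h0, if_pos le_rfl]
end

section
/- Let G be a countable group with norm ‖·‖ and let ν be a symmetric probability measure. Suppose there exist η > 0, c₁ > 0, C₁ with: for all n and x with ‖x‖ ≤ η r(n), c₁ V(r(n))⁻¹ ≤ ν^{(n)}(x), and for all n, x, ν^{(n)}(x) ≤ C₁ V(r(n))⁻¹. Suppose also any x with ‖x‖ ≤ κ r(n) admits a chain e = z₀, …, z_M = x, M ≤ M_κ, with ‖zᵢ⁻¹z_{i+1}‖ ≤ η r(n)/4, and that V is doubling and r is doubling. Then there is c(κ) > 0 such that ν^{(Mn)}(x) ≥ c(κ) V(r(n))⁻¹ for all x with ‖x‖ ≤ κ r(n), via the chaining estimate ν^{(Mn)}(x) ≥ Σ over y₁ ∈ B₁, …, y_M ∈ B_M of ν^{(n)}(y₁)ν^{(n)}(y₁⁻¹y₂)⋯ν^{(n)}(y_M⁻¹x) ≥ c₁^{M+1} V(η r(n)/4)^M V(r(n))^{−M−1}. -/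
open scoped Classical

/-- `n`-fold convolution power of a measure (density) on a countable group. -/
noncomputable def convPow {G : Type*} [Group G] (ν : G → ℝ) : ℕ → G → ℝ
  | 0 => fun g => if g = 1 then 1 else 0
  | n + 1 => fun g => ∑' h : G, ν h * convPow ν n (h⁻¹ * g)

/-- Volume of the ball of radius `s` for the norm `N`. -/
noncomputable def vol {G : Type*} (N : G → ℝ) (s : ℝ) : ℝ :=
  (({g : G | N g ≤ s}).ncard : ℝ)

open scoped ENNReal

/-- `ℝ≥0∞`-valued version of `convPow`. -/
noncomputable def convPowE {G : Type*} [Group G] (μ : G → ℝ≥0∞) : ℕ → G → ℝ≥0∞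
  | 0 => fun g => if g = 1 then 1 else 0
  | n + 1 => fun g => ∑' h : G, μ h * convPowE μ n (h⁻¹ * g)

lemma convPowE_mass {G : Type*} [Group G] (μ : G → ℝ≥0∞) (hμ : ∑' g, μ g = 1) :
    ∀ n : ℕ, ∑' g, convPowE μ n g = 1 := by
  intro n
  induction n with
  | zero =>
      simp only [convPowE]
      rw [show (fun g : G => if g = 1 then (1 : ℝ≥0∞) else 0)
          = fun g : G => if g = 1 then (1 : ℝ≥0∞) else 0 from rfl]
      exact tsum_eq_single 1 (fun b hb => if_neg hb) |>.trans (if_pos rfl)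
  | succ n ih =>
      simp only [convPowE]
      rw [ENNReal.tsum_comm]
      calc ∑' h, ∑' g, μ h * convPowE μ n (h⁻¹ * g)
          = ∑' h : G, μ h * ∑' g, convPowE μ n (h⁻¹ * g) := by
            refine tsum_congr fun h => ?_
            rw [ENNReal.tsum_mul_left]
        _ = ∑' h : G, μ h * 1 := by
            refine tsum_congr fun h => ?_
            congr 1
            rw [← ih]
            exact (Equiv.mulLeft h⁻¹).tsum_eq (convPowE μ n)
        _ = 1 := by simpa using hμ

lemma convPowE_le_one {G : Type*} [Group G] (μ : G → ℝ≥0∞) (hμ : ∑' g, μ g = 1)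
    (n : ℕ) (g : G) : convPowE μ n g ≤ 1 := by
  rw [← convPowE_mass μ hμ n]
  exact ENNReal.le_tsum g

lemma convPowE_add {G : Type*} [Group G] (μ : G → ℝ≥0∞) :
    ∀ (a b : ℕ) (g : G),
      convPowE μ (a + b) g = ∑' y : G, convPowE μ a y * convPowE μ b (y⁻¹ * g) := by
  intro a
  induction a with
  | zero =>
      intro b g
      simp only [Nat.zero_add, convPowE]
      rw [tsum_eq_single 1 (fun y hy => by simp [if_neg hy])]
      simp
  | succ a ih =>
      intro b g
      have : a + 1 + b = (a + b) + 1 := by ring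
      rw [this]
      simp only [convPowE]
      calc ∑' h : G, μ h * convPowE μ (a + b) (h⁻¹ * g)
          = ∑' h : G, μ h * ∑' y : G, convPowE μ a y * convPowE μ b (y⁻¹ * (h⁻¹ * g)) := by
            refine tsum_congr fun h => ?_
            rw [ih]
        _ = ∑' h : G, ∑' y : G, μ h * (convPowE μ a (h⁻¹ * (h * y)) *
              convPowE μ b ((h * y)⁻¹ * g)) := by
            refine tsum_congr fun h => ?_
            rw [ENNReal.tsum_mul_left]
            congr 1
            refine tsum_congr fun y => ?_
            rw [inv_mul_cancel_left, mul_inv_rev, mul_assoc]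
        _ = ∑' h : G, ∑' w : G, μ h * (convPowE μ a (h⁻¹ * w) * convPowE μ b (w⁻¹ * g)) := by
            refine tsum_congr fun h => ?_
            exact (Equiv.mulLeft h).tsum_eq
              (fun w => μ h * (convPowE μ a (h⁻¹ * w) * convPowE μ b (w⁻¹ * g)))
        _ = ∑' w : G, ∑' h : G, μ h * convPowE μ a (h⁻¹ * w) * convPowE μ b (w⁻¹ * g) := by
            rw [ENNReal.tsum_comm]
            exact tsum_congr fun w => tsum_congr fun h => by ring
        _ = ∑' w : G, (∑' h : G, μ h * convPowE μ a (h⁻¹ * w)) * convPowE μ b (w⁻¹ * g) := by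
            refine tsum_congr fun w => ?_
            rw [ENNReal.tsum_mul_right]

lemma convPow_eq_toReal {G : Type*} [Group G] (ν : G → ℝ) (hν0 : ∀ g, 0 ≤ ν g)
    (hprob : ∑' g, ν g = 1) :
    ∀ (n : ℕ) (g : G),
      convPow ν n g = (convPowE (fun g => ENNReal.ofReal (ν g)) n g).toReal := by
  have hμ : ∑' g, ENNReal.ofReal (ν g) = 1 := by
    have hsum : Summable ν := by
      by_contra h
      rw [tsum_eq_zero_of_not_summable h] at hprob
      norm_num at hprob
    rw [← ENNReal.ofReal_tsum_of_nonneg hν0 hsum, hprob, ENNReal.ofReal_one]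
  intro n
  induction n with
  | zero =>
      intro g
      simp only [convPow, convPowE]
      split <;> simp
  | succ n ih =>
      intro g
      simp only [convPow, convPowE]
      rw [ENNReal.tsum_toReal_eq]
      · refine tsum_congr fun h => ?_
        rw [ENNReal.toReal_mul, ENNReal.toReal_ofReal (hν0 h), ih]
      · intro h
        exact ENNReal.mul_ne_top ENNReal.ofReal_ne_top
          (ne_top_of_le_ne_top ENNReal.one_ne_top (convPowE_le_one _ hμ _ _))

/-- The chaining step in the proof of Proposition 3.5: near-diagonal lower bounds at scale
`η r(n)`, a uniform upper bound, and chains of at most `M_κ` steps of size `η r(n)/4` yield a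
lower bound `ν^{(Mn)}(x) ≥ c(κ) V(r(n))⁻¹` for all `‖x‖ ≤ κ r(n)` (some `M ≤ M_κ`). -/
theorem chaining_lower_bound {G : Type*} [Group G] [Countable G]
    (N : G → ℝ)
    (hnonneg : ∀ g, 0 ≤ N g)
    (hzero : ∀ g, N g = 0 ↔ g = 1)
    (hsub : ∀ g h, N (g * h) ≤ N g + N h)
    (hNsymm : ∀ g, N g⁻¹ = N g)
    (hfin : ∀ s : ℝ, {g : G | N g ≤ s}.Finite)
    (CV : ℝ) (hVdoub : ∀ s : ℝ, 0 < s → vol N (2 * s) ≤ CV * vol N s)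
    (r : ℝ → ℝ) (hrpos : ∀ t > 0, 0 < r t) (hrmono : StrictMonoOn r (Set.Ioi 0))
    (Cr : ℝ) (hrdoub : ∀ t > 0, r (2 * t) ≤ Cr * r t)
    (ν : G → ℝ) (hν0 : ∀ g, 0 ≤ ν g) (hνsymm : ∀ g, ν g⁻¹ = ν g)
    (hprob : ∑' g, ν g = 1)
    (η c₁ C₁ : ℝ) (hη : 0 < η) (hc₁ : 0 < c₁)
    (hlow : ∀ n : ℕ, 1 ≤ n → ∀ x : G, N x ≤ η * r n →
      c₁ / vol N (r n) ≤ convPow ν n x)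
    (hup : ∀ n : ℕ, 1 ≤ n → ∀ x : G, convPow ν n x ≤ C₁ / vol N (r n))
    (κ : ℝ) (hκ : 0 < κ) (Mκ : ℕ)
    (hchain : ∀ n : ℕ, 1 ≤ n → ∀ x : G, N x ≤ κ * r n →
      ∃ (M : ℕ) (z : ℕ → G), M ≤ Mκ ∧ z 0 = 1 ∧ z M = x ∧
        ∀ i < M, N ((z i)⁻¹ * z (i + 1)) ≤ η * r n / 4) :
    ∃ c : ℝ, 0 < c ∧ ∀ n : ℕ, 1 ≤ n → ∀ x : G, N x ≤ κ * r n →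
      ∃ M : ℕ, M ≤ Mκ ∧ c / vol N (r n) ≤ convPow ν (M * n) x := by
  classical
  -- Basic volume facts
  have hone : N (1 : G) = 0 := (hzero 1).2 rfl
  have hvol_ge1 : ∀ s : ℝ, 0 ≤ s → 1 ≤ vol N s := by
    intro s hs
    have hmem : (1 : G) ∈ {g : G | N g ≤ s} := by simpa [hone] using hs
    have h : 0 < ({g : G | N g ≤ s}).ncard :=
      (Set.ncard_pos (hfin s)).2 ⟨1, hmem⟩
    simp only [vol]
    exact_mod_cast h
  have hvolmono : ∀ s t : ℝ, s ≤ t → vol N s ≤ vol N t := by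
    intro s t hst
    have h : ({g : G | N g ≤ s}).ncard ≤ ({g : G | N g ≤ t}).ncard :=
      Set.ncard_le_ncard (fun g hg => le_trans hg hst) (hfin t)
    simp only [vol]
    exact_mod_cast h
  have hCVpos : 0 < CV := by
    have h1 : (1 : ℝ) ≤ vol N (2 * 1) := hvol_ge1 _ (by norm_num)
    have h2 : vol N (2 * 1) ≤ CV * vol N 1 := hVdoub 1 one_pos
    have h3 : (1 : ℝ) ≤ vol N 1 := hvol_ge1 1 one_pos.le
    nlinarith
  -- iterated doubling
  have hdoubk : ∀ (j : ℕ) (s : ℝ), 0 < s → vol N (2 ^ j * s) ≤ CV ^ j * vol N s := by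
    intro j
    induction j with
    | zero => intro s hs; simp
    | succ j ih =>
        intro s hs
        have h1 : vol N (2 ^ (j + 1) * s) = vol N (2 * (2 ^ j * s)) := by ring_nf
        have h2 : vol N (2 * (2 ^ j * s)) ≤ CV * vol N (2 ^ j * s) :=
          hVdoub _ (by positivity)
        calc vol N (2 ^ (j + 1) * s) ≤ CV * vol N (2 ^ j * s) := h1 ▸ h2
          _ ≤ CV * (CV ^ j * vol N s) :=
              mul_le_mul_of_nonneg_left (ih s hs) hCVpos.le
          _ = CV ^ (j + 1) * vol N s := by ring
  -- choose k with 4/η ≤ 2^k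
  obtain ⟨k, hk⟩ : ∃ k : ℕ, 4 / η ≤ 2 ^ k := by
    obtain ⟨k, hk⟩ := pow_unbounded_of_one_lt (4 / η) (one_lt_two (α := ℝ))
    exact ⟨k, hk.le⟩
  set a : ℝ := min c₁ 1 with ha_def
  set D : ℝ := max CV 1 with hD_def
  have ha_pos : 0 < a := lt_min hc₁ one_pos
  have ha_le1 : a ≤ 1 := min_le_right _ _
  have ha_lec : a ≤ c₁ := min_le_left _ _
  have hD1 : 1 ≤ D := le_max_right _ _
  have hCVD : CV ≤ D := le_max_left _ _
  refine ⟨a ^ Mκ / D ^ (k * Mκ), by positivity, ?_⟩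
  intro n hn x hx
  obtain ⟨M, z, hM, hz0, hzM, hstep⟩ := hchain n hn x hx
  refine ⟨M, hM, ?_⟩
  have hrn : 0 < r n := hrpos _ (by exact_mod_cast Nat.lt_of_lt_of_le one_pos hn)
  set V : ℝ := vol N (r n) with hV_def
  set Vb : ℝ := vol N (η * r n / 4) with hVb_def
  have hV1 : 1 ≤ V := hvol_ge1 _ hrn.le
  have hVb1 : 1 ≤ Vb := hvol_ge1 _ (by positivity)
  have hc_le_one : a ^ Mκ / D ^ (k * Mκ) ≤ 1 :=
    div_le_one_of_le₀ (le_trans (pow_le_one₀ ha_pos.le ha_le1) (one_le_pow₀ hD1))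
      (by positivity)
  -- trivial case M = 0
  rcases Nat.eq_zero_or_pos M with hM0 | hMpos
  · subst hM0
    have hx1 : x = 1 := by rw [← hzM, hz0]
    have : convPow ν (0 * n) x = 1 := by
      simp [convPow, hx1]
    rw [this]
    exact div_le_one_of_le₀ (le_trans hc_le_one hV1) (by positivity)
  -- main case : M ≥ 1
  obtain ⟨m, rfl⟩ : ∃ m, M = m + 1 := ⟨M - 1, (Nat.succ_pred_eq_of_pos hMpos).symm⟩
  set μ : G → ℝ≥0∞ := fun g => ENNReal.ofReal (ν g) with hμ_def
  have hμ : ∑' g, μ g = 1 := by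
    have hsum : Summable ν := by
      by_contra h
      rw [tsum_eq_zero_of_not_summable h] at hprob
      norm_num at hprob
    rw [hμ_def, ← ENNReal.ofReal_tsum_of_nonneg hν0 hsum, hprob, ENNReal.ofReal_one]
  have hconv : ∀ (m : ℕ) (g : G), convPow ν m g = (convPowE μ m g).toReal :=
    convPow_eq_toReal ν hν0 hprob
  set L : ℝ≥0∞ := ENNReal.ofReal (c₁ / V) with hL_def
  have hlowE : ∀ y : G, N y ≤ η * r n → L ≤ convPowE μ n y := by
    intro y hy
    have h1 := hlow n hn y hy
    rw [hconv n y] at h1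
    have h2 : L ≤ ENNReal.ofReal ((convPowE μ n y).toReal) := ENNReal.ofReal_le_ofReal h1
    rwa [ENNReal.ofReal_toReal
      (ne_top_of_le_ne_top ENNReal.one_ne_top (convPowE_le_one μ hμ n y))] at h2
  -- balls around chain points
  have hball : ∀ w : G, {y : G | N (w⁻¹ * y) ≤ η * r n / 4}
      = (fun g => w * g) '' {g : G | N g ≤ η * r n / 4} := by
    intro w
    ext y
    constructor
    · intro hy; exact ⟨w⁻¹ * y, hy, by group⟩
    · rintro ⟨g, hg, rfl⟩; simpa using hg
  have hballfin : ∀ w : G, ({y : G | N (w⁻¹ * y) ≤ η * r n / 4}).Finite := by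
    intro w; rw [hball w]; exact (hfin _).image _
  have hballcard : ∀ w : G,
      (({y : G | N (w⁻¹ * y) ≤ η * r n / 4}).ncard : ℝ) = Vb := by
    intro w
    rw [hball w, Set.ncard_image_of_injective _ (mul_right_injective w)]
    rfl
  have hηr4 : 0 < η * r n / 4 := by positivity
  -- the chaining claim
  have claim : ∀ j : ℕ, j + 1 ≤ m + 1 → ∀ h : G, N ((z (j + 1))⁻¹ * h) ≤ η * r n / 4 →
      (ENNReal.ofReal Vb) ^ j * L ^ (j + 1) ≤ convPowE μ ((j + 1) * n) h := by
    intro j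
    induction j with
    | zero =>
        intro hj h hh
        have hz1 : N (z 1) ≤ η * r n / 4 := by
          have := hstep 0 (by omega)
          rwa [hz0, inv_one, one_mul] at this
        have hNh : N h ≤ η * r n := by
          have htri := hsub (z 1) ((z 1)⁻¹ * h)
          rw [show z 1 * ((z 1)⁻¹ * h) = h by group] at htri
          nlinarith [hη.le, hrn.le]
        simpa [one_mul] using hlowE h hNh
    | succ j ih =>
        intro hj h hh
        have hjm : j + 1 ≤ m + 1 := by omega
        rw [show (j + 1 + 1) * n = (j + 1) * n + n by ring, convPowE_add μ]
        set S : Finset G := (hballfin (z (j + 1))).toFinset with hS_def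
        have hcardS : (S.card : ℝ≥0∞) = ENNReal.ofReal Vb := by
          have h1 : S.card = ({y : G | N ((z (j + 1))⁻¹ * y) ≤ η * r n / 4}).ncard :=
            (Set.ncard_eq_toFinset_card _ (hballfin (z (j + 1)))).symm
          rw [h1, ← ENNReal.ofReal_natCast, hballcard (z (j + 1))]
        have hterm : ∀ y ∈ S,
            (ENNReal.ofReal Vb) ^ j * L ^ (j + 1) * L
              ≤ convPowE μ ((j + 1) * n) y * convPowE μ n (y⁻¹ * h) := by
          intro y hy
          rw [hS_def, Set.Finite.mem_toFinset] at hy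
          have hy' : N ((z (j + 1))⁻¹ * y) ≤ η * r n / 4 := hy
          have h1 := ih hjm y hy'
          have hNyh : N (y⁻¹ * h) ≤ η * r n := by
            have e1 : N (y⁻¹ * z (j + 1)) = N ((z (j + 1))⁻¹ * y) := by
              rw [← hNsymm ((z (j + 1))⁻¹ * y)]; congr 1; group
            have t1 := hsub (y⁻¹ * z (j + 1)) ((z (j + 1))⁻¹ * h)
            rw [show (y⁻¹ * z (j + 1)) * ((z (j + 1))⁻¹ * h) = y⁻¹ * h by group] at t1
            have t2 := hsub ((z (j + 1))⁻¹ * z (j + 2)) ((z (j + 2))⁻¹ * h)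
            rw [show ((z (j + 1))⁻¹ * z (j + 2)) * ((z (j + 2))⁻¹ * h)
                = (z (j + 1))⁻¹ * h by group] at t2
            have hs1 := hstep (j + 1) (by omega)
            nlinarith [hη.le, hrn.le]
          exact mul_le_mul' h1 (hlowE _ hNyh)
        calc (ENNReal.ofReal Vb) ^ (j + 1) * L ^ (j + 1 + 1)
            = (S.card : ℝ≥0∞) * ((ENNReal.ofReal Vb) ^ j * L ^ (j + 1) * L) := by
              rw [hcardS]; ring
          _ = ∑ _y ∈ S, (ENNReal.ofReal Vb) ^ j * L ^ (j + 1) * L := by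
              rw [Finset.sum_const, nsmul_eq_mul]
          _ ≤ ∑ y ∈ S, convPowE μ ((j + 1) * n) y * convPowE μ n (y⁻¹ * h) :=
              Finset.sum_le_sum hterm
          _ ≤ ∑' y : G, convPowE μ ((j + 1) * n) y * convPowE μ n (y⁻¹ * h) :=
              ENNReal.sum_le_tsum S
  -- apply the claim at x
  have hxz : N ((z (m + 1))⁻¹ * x) ≤ η * r n / 4 := by
    rw [hzM, inv_mul_cancel, hone]; positivity
  have hmain := claim m le_rfl x hxz
  -- convert back to ℝ
  have hfin' : convPowE μ ((m + 1) * n) x ≠ ⊤ :=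
    ne_top_of_le_ne_top ENNReal.one_ne_top (convPowE_le_one μ hμ _ _)
  have hreal : Vb ^ m * (c₁ / V) ^ (m + 1) ≤ convPow ν ((m + 1) * n) x := by
    rw [hconv]
    have := ENNReal.toReal_mono hfin' hmain
    rwa [ENNReal.toReal_mul, ENNReal.toReal_pow, ENNReal.toReal_pow,
      ENNReal.toReal_ofReal (by positivity : (0:ℝ) ≤ Vb),
      ENNReal.toReal_ofReal (by positivity : (0:ℝ) ≤ c₁ / V)] at this
  refine le_trans ?_ hreal
  -- final arithmetic
  have hCVk : (0 : ℝ) < CV ^ k := by positivity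
  have hVbV : V / CV ^ k ≤ Vb := by
    have h1 : r n ≤ 2 ^ k * (η * r n / 4) := by
      have h0 : (4 / η) * (η * r n / 4) = r n := by field_simp
      calc r n = (4 / η) * (η * r n / 4) := h0.symm
        _ ≤ 2 ^ k * (η * r n / 4) := mul_le_mul_of_nonneg_right hk (by positivity)
    have h2 : V ≤ CV ^ k * Vb :=
      le_trans (hvolmono _ _ h1) (hdoubk k _ hηr4)
    rw [div_le_iff₀ hCVk]
    linarith [h2, mul_comm (CV ^ k) Vb]
  have key2 : a ^ Mκ / D ^ (k * Mκ) ≤ c₁ ^ (m + 1) / (CV ^ k) ^ m := by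
    have hnum : a ^ Mκ ≤ c₁ ^ (m + 1) := by
      calc a ^ Mκ ≤ a ^ (m + 1) := pow_le_pow_of_le_one ha_pos.le ha_le1 (by omega)
        _ ≤ c₁ ^ (m + 1) := pow_le_pow_left₀ ha_pos.le ha_lec _
    have hden : (CV ^ k) ^ m ≤ D ^ (k * Mκ) := by
      calc (CV ^ k) ^ m = CV ^ (k * m) := by rw [← pow_mul]
        _ ≤ D ^ (k * m) := pow_le_pow_left₀ hCVpos.le hCVD _
        _ ≤ D ^ (k * Mκ) := pow_le_pow_right₀ hD1 (by exact Nat.mul_le_mul_left k (by omega))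
    exact div_le_div₀ (by positivity) hnum (by positivity) hden
  have heq : (V / CV ^ k) ^ m * (c₁ / V) ^ (m + 1)
      = c₁ ^ (m + 1) / (CV ^ k) ^ m / V := by
    have hVne : V ≠ 0 := by positivity
    have hCVkne : CV ^ k ≠ 0 := by positivity
    field_simp
    have e1 : CV ^ (k * m) * CV⁻¹ ^ (k * m) = 1 := by
      rw [← mul_pow, mul_inv_cancel₀ hCVpos.ne', one_pow]
    have e2 : V ^ m * V⁻¹ ^ m = 1 := by rw [← mul_pow, mul_inv_cancel₀ hVne, one_pow]
    have e3 : V * V⁻¹ = 1 := mul_inv_cancel₀ hVne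
    linear_combination (c₁ * c₁ ^ m) * ((V * V⁻¹) * (V ^ m * V⁻¹ ^ m) * e1
      + (V * V⁻¹) * e2 + e3)
  calc a ^ Mκ / D ^ (k * Mκ) / V ≤ c₁ ^ (m + 1) / (CV ^ k) ^ m / V :=
        (div_le_div_iff_of_pos_right (by positivity : (0:ℝ) < V)).2 key2
    _ = (V / CV ^ k) ^ m * (c₁ / V) ^ (m + 1) := heq.symm
    _ ≤ Vb ^ m * (c₁ / V) ^ (m + 1) :=
        mul_le_mul_of_nonneg_right (pow_le_pow_left₀ (by positivity) hVbV _) (by positivity)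
end
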